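/- Let M and N be matroids on the same ground set U, let I be a common independent set, and let P be a simple directed cycle in the exchange graph G_{M,N}(I) admitting no shortcut arc. Then I ⊖ P (the symmetric-difference update of I along P) is a common independent set of M and N. -/

import Mathlib

open Finset
open scoped Classical

/-- A matroid on a finite ground type `U`, given by its independent sets. -/
structure FinMatroid (U : Type*) [DecidableEq U] [Fintype U] where
  Indep : Finset U → Prop
  empty_indep : Indep ∅
  subset_indep : ∀ ⦃I J : Finset U⦄, I ⊆ J → Indep J → Indep I
  exchange : ∀ ⦃I J : Finset U⦄, Indep I → Indep J → I.card < J.card →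
    ∃ u ∈ J, u ∉ I ∧ Indep (insert u I)

namespace FinMatroid

variable {U : Type*} [DecidableEq U] [Fintype U]

/-- A circuit: an inclusion-wise minimal dependent set. -/
def Circuit (M : FinMatroid U) (C : Finset U) : Prop :=
  ¬ M.Indep C ∧ ∀ D ⊂ C, M.Indep D

/-- `sp M I`: elements `u ∉ I` with `I + u` dependent. -/
def sp (M : FinMatroid U) (I : Finset U) : Set U :=
  {u | u ∉ I ∧ ¬ M.Indep (insert u I)}

/-- The fundamental circuit of `u` for the independent set `I`
(for `u ∈ sp M I` this is the unique circuit contained in `I + u`). -/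
noncomputable def fundC (M : FinMatroid U) (I : Finset U) (u : U) : Finset U :=
  (insert u I).filter (fun w => M.Indep ((insert u I).erase w))

/-- The rank of a set: maximum size of an independent subset. -/
noncomputable def rk (M : FinMatroid U) (X : Finset U) : ℕ :=
  ((X.powerset).filter (fun I => M.Indep I)).sup Finset.card

end FinMatroid

variable {U : Type*} [DecidableEq U] [Fintype U]

/-- Independence predicate of the restriction of an independence system to `X`. -/
def RestrictIndep (Ind : Finset U → Prop) (X : Finset U) (I : Finset U) : Prop :=
  I ⊆ X ∧ Ind I

/-- Rank function associated with an independence predicate. -/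
noncomputable def rkOf (Ind : Finset U → Prop) (X : Finset U) : ℕ :=
  ((X.powerset).filter Ind).sup Finset.card

/-- Independence predicate of the contraction by `X`:
`I ⊆ U \ X` is independent iff `r(I ∪ X) - r(X) = |I|`. -/
def ContractIndepOf (Ind : Finset U → Prop) (X I : Finset U) : Prop :=
  Disjoint I X ∧ rkOf Ind (I ∪ X) = rkOf Ind X + I.card

/-- A base: a maximal independent set. -/
def BaseOf (Ind : Finset U → Prop) (B : Finset U) : Prop :=
  Ind B ∧ ∀ J, Ind J → B ⊆ J → J = B

/-- A circuit of a general independence system. -/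
def CircuitOf (Ind : Finset U → Prop) (C : Finset U) : Prop :=
  ¬ Ind C ∧ ∀ D ⊂ C, Ind D

/-- A simple directed cycle in the digraph with arc relation `A`:
`n` vertices `vtx 0, …, vtx (n-1)` (extended periodically), pairwise distinct,
with an arc from each vertex to the next. -/
structure SimpleDCycle {V : Type*} (A : V → V → Prop) where
  n : ℕ
  hn : 0 < n
  vtx : ℕ → V
  periodic : ∀ i, vtx (i + n) = vtx i
  inj : ∀ i j, i < n → j < n → vtx i = vtx j → i = j
  arc : ∀ i, A (vtx i) (vtx (i + 1))

/-- The set of arcs that the cycle passes through. -/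
def SimpleDCycle.arcs {V : Type*} {A : V → V → Prop} (P : SimpleDCycle A) :
    Set (V × V) :=
  {p | ∃ i < P.n, p = (P.vtx i, P.vtx (i + 1))}

/-- The set of vertices that the cycle passes through. -/
def SimpleDCycle.vtxSet {V : Type*} {A : V → V → Prop} (P : SimpleDCycle A) :
    Set V :=
  {v | ∃ i < P.n, P.vtx i = v}

/-- `a` is a shortcut arc for `P`: an arc of the digraph not traversed by `P`
such that `P + a` contains a simple directed cycle different from `P`. -/
def IsShortcut {V : Type*} (A : V → V → Prop) (P : SimpleDCycle A)
    (a : V × V) : Prop :=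
  A a.1 a.2 ∧ a ∉ P.arcs ∧
    ∃ Q : SimpleDCycle A, Q.arcs ⊆ insert a P.arcs ∧ Q.arcs ≠ P.arcs

/-- The arc relation of the exchange graph `G_{M,N}(I)`:  for `v ∈ I` and
`u ∉ I` there is an arc `v → u` iff `u ∈ sp_M(I)` and `v ∈ C_M(u,I) - u`,
and an arc `u → v` iff `u ∈ sp_N(I)` and `v ∈ C_N(u,I) - u`. -/
def ExchangeArc {U : Type*} [DecidableEq U] [Fintype U]
    (M N : FinMatroid U) (I : Finset U) (a b : U) : Prop :=
  (a ∈ I ∧ b ∉ I ∧ b ∈ M.sp I ∧ a ∈ (M.fundC I b).erase b) ∨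
  (a ∉ I ∧ b ∈ I ∧ a ∈ N.sp I ∧ b ∈ (N.fundC I a).erase a)


namespace FinMatroid
section Aux
variable {U : Type*} [DecidableEq U] [Fintype U]
variable {M : FinMatroid U}

lemma exists_circuit_subset {S : Finset U} (hS : ¬ M.Indep S) :
    ∃ C ⊆ S, M.Circuit C := by
  obtain ⟨C, hCmem, hCmin⟩ :=
    Finset.exists_minimal (s := S.powerset.filter (fun T => ¬ M.Indep T))
      ⟨S, by simp [hS]⟩
  simp only [mem_filter, mem_powerset] at hCmem
  refine ⟨C, hCmem.1, hCmem.2, fun D hD => ?_⟩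
  by_contra hdep
  exact hD.2 (hCmin (by simp [mem_filter, mem_powerset, hdep, hD.subset.trans hCmem.1]) hD.subset)

lemma card_le_of_maximal {S B J : Finset U} (hB : M.Indep B) (_ : B ⊆ S)
    (hmax : ∀ x ∈ S, x ∉ B → ¬ M.Indep (insert x B))
    (hJ : M.Indep J) (hJS : J ⊆ S) : J.card ≤ B.card := by
  by_contra h
  push_neg at h
  obtain ⟨u, huJ, huB, hind⟩ := M.exchange hB hJ h
  exact hmax u (hJS huJ) huB hind

lemma weak_elim {C₁ C₂ : Finset U} (h₁ : M.Circuit C₁) (h₂ : M.Circuit C₂)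
    (hne : C₁ ≠ C₂) {e : U} (he₁ : e ∈ C₁) (he₂ : e ∈ C₂) :
    ¬ M.Indep ((C₁ ∪ C₂).erase e) := by
  intro hind
  have hsub : ¬ C₁ ⊆ C₂ := fun h => h₁.1 (h₂.2 C₁ (ssubset_of_subset_of_ne h hne))
  obtain ⟨f, hfC₁, hfC₂⟩ := not_subset.mp hsub
  set S := C₁ ∪ C₂ with hSdef
  set T := S.powerset.filter (fun B => M.Indep B ∧ C₁.erase f ⊆ B) with hTdef
  have hTne : (C₁.erase f) ∈ T := by
    simp only [hTdef, mem_filter, mem_powerset]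
    exact ⟨(erase_subset f C₁).trans subset_union_left,
      h₁.2 _ (erase_ssubset hfC₁), subset_rfl⟩
  obtain ⟨B, hBT, hBmax⟩ := T.exists_max_image Finset.card ⟨_, hTne⟩
  simp only [hTdef, mem_filter, mem_powerset] at hBT
  obtain ⟨hBS, hBind, hBsup⟩ := hBT
  have hmax : ∀ x ∈ S, x ∉ B → ¬ M.Indep (insert x B) := by
    intro x hxS hxB hxind
    have hmem : insert x B ∈ T := by
      simp only [hTdef, mem_filter, mem_powerset]
      exact ⟨insert_subset hxS hBS, hxind, hBsup.trans (subset_insert x B)⟩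
    have := hBmax _ hmem
    rw [card_insert_of_notMem hxB] at this
    omega
  have hfB : f ∉ B := by
    intro hfB
    exact h₁.1 (M.subset_indep (by
      intro x hx
      rcases eq_or_ne x f with rfl | hxf
      · exact hfB
      · exact hBsup (mem_erase.mpr ⟨hxf, hx⟩)) hBind)
  have hgex : ∃ g ∈ C₂, g ∉ B := by
    by_contra h
    push_neg at h
    exact h₂.1 (M.subset_indep h hBind)
  obtain ⟨g, hgC₂, hgB⟩ := hgex
  have hgf : g ≠ f := fun h => hfC₂ (h ▸ hgC₂)
  have hBsub : B ⊆ (S.erase f).erase g := by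
    intro x hx
    exact mem_erase.mpr ⟨fun h => hgB (h ▸ hx),
      mem_erase.mpr ⟨fun h => hfB (h ▸ hx), hBS hx⟩⟩
  have hfS : f ∈ S := mem_union_left _ hfC₁
  have hgS : g ∈ S.erase f := mem_erase.mpr ⟨hgf, mem_union_right _ hgC₂⟩
  have hcard1 : B.card ≤ S.card - 2 := by
    have := card_le_card hBsub
    rw [card_erase_of_mem hgS, card_erase_of_mem hfS] at this
    omega
  have heS : e ∈ S := mem_union_left _ he₁
  have hcard2 : S.card - 1 ≤ B.card := by
    have := card_le_of_maximal hBind hBS hmax hind (erase_subset e S)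
    rw [card_erase_of_mem heS] at this
    exact this
  have hfe : f ≠ e := fun h => hfC₂ (h ▸ he₂)
  have h2 : 2 ≤ S.card := by
    have : ({f, e} : Finset U) ⊆ S := by
      intro x hx
      rcases mem_insert.mp hx with rfl | hx
      · exact hfS
      · exact (mem_singleton.mp hx) ▸ heS
    have := card_le_card this
    rwa [card_insert_of_notMem (by simp [hfe]), card_singleton] at this
  omega

lemma fundC_subset (I : Finset U) (u : U) : M.fundC I u ⊆ insert u I :=
  filter_subset _ _

lemma mem_fundC_self {I : Finset U} {u : U} (hI : M.Indep I) (hu : u ∉ I) :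
    u ∈ M.fundC I u := by
  simp only [fundC, mem_filter, mem_insert, true_or, true_and,
    Finset.erase_insert hu]
  exact hI

lemma fundC_circuit {I : Finset U} {u : U} (hI : M.Indep I) (hu : u ∉ I)
    (hdep : ¬ M.Indep (insert u I)) : M.Circuit (M.fundC I u) := by
  obtain ⟨C, hCsub, hC⟩ := exists_circuit_subset hdep
  have hCI : ¬ C ⊆ I := fun h => hC.1 (M.subset_indep h hI)
  have huC : u ∈ C := by
    by_contra h
    exact hCI (fun x hx => (mem_insert.mp (hCsub hx)).resolve_left
      (fun he => h (he ▸ hx)))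
  suffices h : M.fundC I u = C by rw [h]; exact hC
  ext w
  simp only [fundC, mem_filter]
  constructor
  · rintro ⟨hwJ, hwind⟩
    by_contra hwC
    exact hC.1 (M.subset_indep (fun x hx =>
      mem_erase.mpr ⟨fun he => hwC (by rwa [he] at hx), hCsub hx⟩) hwind)
  · intro hwC
    refine ⟨hCsub hwC, ?_⟩
    rcases eq_or_ne w u with rfl | hwu
    · rwa [Finset.erase_insert hu]
    · by_contra hdp
      obtain ⟨C', hC'sub, hC'⟩ := exists_circuit_subset hdp
      have huC' : u ∈ C' := by
        by_contra h
        refine hC'.1 (M.subset_indep (fun x hx => ?_) hI)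
        have := hC'sub hx
        rcases mem_insert.mp (mem_of_mem_erase this) with rfl | hxI
        · exact absurd hx h
        · exact hxI
      have hCC' : C ≠ C' := by
        intro h
        rw [h] at hwC
        exact (notMem_erase w _) (hC'sub hwC)
      refine weak_elim hC hC' hCC' huC huC' (M.subset_indep (fun x hx => ?_) hI)
      obtain ⟨hxu, hxCC'⟩ := mem_erase.mp hx
      rcases mem_union.mp hxCC' with hxC | hxC'
      · exact (mem_insert.mp (hCsub hxC)).resolve_left hxu
      · exact (mem_insert.mp (mem_of_mem_erase (hC'sub hxC'))).resolve_left hxu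


lemma key_lemma (M : FinMatroid U) (I X Y : Finset U) (m : U → U)
    (hI : M.Indep I)
    (hXI : ∀ u ∈ X, u ∉ I) (_hYI : Y ⊆ I)
    (hmY : ∀ u ∈ X, m u ∈ Y)
    (hminj : ∀ u ∈ X, ∀ u' ∈ X, m u = m u' → u = u')
    (hdep : ∀ u ∈ X, ¬ M.Indep (insert u I))
    (hmem : ∀ u ∈ X, m u ∈ M.fundC I u)
    (hfund : ∀ u ∈ X, ∀ y ∈ Y, y ∈ M.fundC I u → y = m u) :
    M.Indep ((I ∪ X) \ Y) := by
  by_contra hdp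
  obtain ⟨C₀, hC₀sub, hC₀⟩ := exists_circuit_subset hdp
  have main : ∀ k (C : Finset U), (C ∩ X).card = k → M.Circuit C → C ⊆ I ∪ X →
      (∀ u ∈ C ∩ X, m u ∉ C) → False := by
    intro k
    induction k using Nat.strong_induction_on with
    | _ k IH =>
      intro C hk hC hCsub hinv
      rcases (C ∩ X).eq_empty_or_nonempty with hemp | ⟨u, hu⟩
      · -- C ⊆ I, contradiction with C dependent
        refine hC.1 (M.subset_indep (fun x hx => ?_) hI)
        rcases mem_union.mp (hCsub hx) with h | h
        · exact h
        · exact absurd (mem_inter.mpr ⟨hx, h⟩) (by simp [hemp])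
      · obtain ⟨huC, huX⟩ := mem_inter.mp hu
        have huI := hXI u huX
        set F := M.fundC I u with hF
        have hFc : M.Circuit F := fundC_circuit hI huI (hdep u huX)
        have hmuF : m u ∈ F := hmem u huX
        have hmuC : m u ∉ C := hinv u hu
        have hne : C ≠ F := fun h => hmuC (h ▸ hmuF)
        have huF : u ∈ F := mem_fundC_self hI huI
        have hdep' := weak_elim hC hFc hne huC huF
        obtain ⟨D, hDsub, hD⟩ := exists_circuit_subset hdep'
        have hDIX : D ⊆ I ∪ X := by
          intro x hx
          obtain ⟨hxu, hxCF⟩ := mem_erase.mp (hDsub hx)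
          rcases mem_union.mp hxCF with h | h
          · exact hCsub h
          · rcases mem_insert.mp (fundC_subset I u h) with rfl | h
            · exact absurd rfl hxu
            · exact mem_union_left _ h
        have hDCX : D ∩ X ⊆ (C ∩ X).erase u := by
          intro x hx
          obtain ⟨hxD, hxX⟩ := mem_inter.mp hx
          obtain ⟨hxu, hxCF⟩ := mem_erase.mp (hDsub hxD)
          have hxC : x ∈ C := by
            rcases mem_union.mp hxCF with h | h
            · exact h
            · rcases mem_insert.mp (fundC_subset I u h) with rfl | h
              · exact absurd rfl hxu
              · exact absurd h (hXI x hxX)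
          exact mem_erase.mpr ⟨hxu, mem_inter.mpr ⟨hxC, hxX⟩⟩
        have hcard : (D ∩ X).card < k := by
          have := card_le_card hDCX
          rw [card_erase_of_mem hu] at this
          have hpos : 0 < (C ∩ X).card := card_pos.mpr ⟨u, hu⟩
          omega
        refine IH _ hcard D rfl hD hDIX ?_
        intro x hx
        obtain ⟨hxD, hxX⟩ := mem_inter.mp hx
        have hxC : x ∈ C ∩ X := mem_of_mem_erase (hDCX hx)
        have hxu : x ≠ u := (mem_erase.mp (hDCX hx)).1
        have hmxC : m x ∉ C := hinv x hxC
        have hmxF : m x ∉ F := by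
          intro h
          exact hxu (hminj x hxX u huX (hfund u huX (m x) (hmY x hxX) h))
        intro hmxD
        obtain ⟨_, hmxCF⟩ := mem_erase.mp (hDsub hmxD)
        rcases mem_union.mp hmxCF with h | h
        · exact hmxC h
        · exact hmxF h
  refine main _ C₀ rfl hC₀ (hC₀sub.trans (sdiff_subset)) ?_
  intro u hu hmuC
  have := hC₀sub hmuC
  exact (mem_sdiff.mp this).2 (hmY u (mem_inter.mp hu).2)


end Aux
end FinMatroid

namespace SimpleDCycle

variable {V : Type*} {A : V → V → Prop} (P : SimpleDCycle A)

lemma vtx_mod (i : ℕ) : P.vtx i = P.vtx (i % P.n) := by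
  induction i using Nat.strong_induction_on with
  | _ i IH =>
    by_cases h : i < P.n
    · rw [Nat.mod_eq_of_lt h]
    · push_neg at h
      have h1 : i - P.n + P.n = i := Nat.sub_add_cancel h
      have h2 : P.vtx i = P.vtx (i - P.n) := by
        conv_lhs => rw [← h1]
        exact P.periodic _
      have h3 : i % P.n = (i - P.n) % P.n := by
        conv_lhs => rw [← h1]
        exact Nat.add_mod_right _ _
      rw [h2, h3]
      exact IH _ (by have := P.hn; omega)

lemma vtx_inj_mod {i j : ℕ} (h : P.vtx i = P.vtx j) : i % P.n = j % P.n :=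
  P.inj _ _ (Nat.mod_lt _ P.hn) (Nat.mod_lt _ P.hn)
    (by rw [← P.vtx_mod, ← P.vtx_mod]; exact h)

lemma vtx_congr {i j : ℕ} (h : i % P.n = j % P.n) : P.vtx i = P.vtx j := by
  rw [P.vtx_mod i, P.vtx_mod j, h]

lemma vtx_mem_vtxSet (i : ℕ) : P.vtx i ∈ P.vtxSet :=
  ⟨i % P.n, Nat.mod_lt _ P.hn, (P.vtx_mod i).symm⟩

lemma chord_shortcut {x y : V} (hx : x ∈ P.vtxSet) (hy : y ∈ P.vtxSet)
    (hxy : x ≠ y) (ha : A x y) (hna : (x, y) ∉ P.arcs) :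
    IsShortcut A P (x, y) := by
  obtain ⟨i, hi, hxi⟩ := hx
  obtain ⟨j, hj, hyj⟩ := hy
  have hn := P.hn
  have hij : i ≠ j := fun h => hxy (by rw [← hxi, ← hyj, h])
  obtain ⟨m, hm1, hm2, hjm⟩ :
      ∃ m, 1 ≤ m ∧ m + 1 ≤ P.n ∧ (j + m) % P.n = i % P.n := by
    rcases lt_or_ge j i with h | h
    · exact ⟨i - j, by omega, by omega, by rw [show j + (i - j) = i by omega]⟩
    · have hij' : i < j := by omega
      exact ⟨i + P.n - j, by omega, by omega,
        by rw [show j + (i + P.n - j) = i + P.n by omega, Nat.add_mod_right]⟩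
  have hvjm : P.vtx (j + m) = x := by rw [P.vtx_congr hjm]; exact hxi
  refine ⟨ha, hna, ?_⟩
  have hQv1 : ∀ l ≤ m, P.vtx (j + l % (m + 1)) = P.vtx (j + l) := by
    intro l hl
    rw [Nat.mod_eq_of_lt (by omega)]
  have hmod0 : ∀ l : ℕ, l % (m + 1) = m → (l + 1) % (m + 1) = 0 := by
    intro l hl
    have h1 : l + 1 ≡ l % (m + 1) + 1 [MOD m + 1] :=
      Nat.ModEq.add_right 1 (Nat.mod_modEq l (m + 1)).symm
    rw [hl] at h1
    have h2 : m + 1 ≡ 0 [MOD m + 1] := (Nat.modEq_zero_iff_dvd).mpr dvd_rfl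
    have h3 := h1.trans h2
    simpa [Nat.ModEq] using h3
  have hmods : ∀ l : ℕ, l % (m + 1) < m → (l + 1) % (m + 1) = l % (m + 1) + 1 := by
    intro l hl
    have h1 : l + 1 ≡ l % (m + 1) + 1 [MOD m + 1] :=
      Nat.ModEq.add_right 1 (Nat.mod_modEq l (m + 1)).symm
    have h2 : (l + 1) % (m + 1) = (l % (m + 1) + 1) % (m + 1) := h1
    rw [h2, Nat.mod_eq_of_lt (by omega)]
  refine ⟨⟨m + 1, by omega, fun l => P.vtx (j + l % (m + 1)), ?_, ?_, ?_⟩, ?_, ?_⟩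
  · intro l
    show P.vtx (j + (l + (m + 1)) % (m + 1)) = P.vtx (j + l % (m + 1))
    rw [Nat.add_mod_right]
  · intro l₁ l₂ h1 h2 heq
    have heq' : P.vtx (j + l₁ % (m + 1)) = P.vtx (j + l₂ % (m + 1)) := heq
    rw [Nat.mod_eq_of_lt h1, Nat.mod_eq_of_lt h2] at heq'
    have e1 : (j + l₁) % P.n = (j + l₂) % P.n := P.vtx_inj_mod heq'
    have e2 : l₁ % P.n = l₂ % P.n := Nat.ModEq.add_left_cancel' j e1
    rw [Nat.mod_eq_of_lt (by omega), Nat.mod_eq_of_lt (by omega)] at e2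
    exact e2
  · intro l
    show A (P.vtx (j + l % (m + 1))) (P.vtx (j + (l + 1) % (m + 1)))
    set r := l % (m + 1) with hr
    have hrm : r ≤ m := by
      have := Nat.mod_lt l (show 0 < m + 1 by omega)
      omega
    rcases lt_or_eq_of_le hrm with hlt | heq
    · rw [hmods l hlt]
      have := P.arc (j + r)
      rwa [show j + r + 1 = j + (r + 1) by omega] at this
    · rw [hmod0 l (hr ▸ heq)]
      have e1 : P.vtx (j + r) = x := by rw [heq]; exact hvjm
      have e2 : P.vtx (j + 0) = y := by rw [Nat.add_zero]; exact hyj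
      rw [e1, e2]
      exact ha
  · rintro ⟨p₁, p₂⟩ ⟨l, hl, hp⟩
    have hl' : l < m + 1 := hl
    have hp' : (p₁, p₂) = (P.vtx (j + l % (m + 1)), P.vtx (j + (l + 1) % (m + 1))) := hp
    have hlm : l % (m + 1) = l := Nat.mod_eq_of_lt hl' 
    rcases lt_or_eq_of_le (show l ≤ m by omega) with hlt | heq
    · right
      refine ⟨(j + l) % P.n, Nat.mod_lt _ hn, ?_⟩
      have e1 : P.vtx (j + l % (m + 1)) = P.vtx ((j + l) % P.n) := by
        rw [hlm]; exact P.vtx_mod _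
      have e2 : P.vtx (j + (l + 1) % (m + 1)) = P.vtx ((j + l) % P.n + 1) := by
        rw [hmods l (by omega), hlm]
        refine P.vtx_congr ?_
        show (j + (l + 1)) % P.n = ((j + l) % P.n + 1) % P.n
        have : (j + l) % P.n + 1 ≡ (j + l) + 1 [MOD P.n] :=
          Nat.ModEq.add_right 1 (Nat.mod_modEq (j + l) P.n)
        rw [show j + (l + 1) = j + l + 1 by omega]
        exact this.symm
      rw [hp', e1, e2]
    · left
      have e1 : P.vtx (j + l % (m + 1)) = x := by
        rw [hlm, heq]; exact hvjm
      have e2 : P.vtx (j + (l + 1) % (m + 1)) = y := by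
        rw [hmod0 l (by rw [hlm, heq]), Nat.add_zero]; exact hyj
      rw [hp', e1, e2]
  · intro h
    apply hna
    rw [← h]
    refine ⟨m, Nat.lt_succ_self m, ?_⟩
    show (x, y) = (P.vtx (j + m % (m + 1)), P.vtx (j + (m + 1) % (m + 1)))
    have e1 : P.vtx (j + m % (m + 1)) = x := by
      rw [Nat.mod_eq_of_lt (by omega)]; exact hvjm
    have e2 : P.vtx (j + (m + 1) % (m + 1)) = y := by
      rw [Nat.mod_self, Nat.add_zero]; exact hyj
    rw [e1, e2]

end SimpleDCycle

theorem cycle_update_common_indep (M N : FinMatroid U) (I : Finset U)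
    (hM : M.Indep I) (hN : N.Indep I)
    (P : SimpleDCycle (ExchangeArc M N I))
    (hns : ∀ a : U × U, ¬ IsShortcut (ExchangeArc M N I) P a) :
    M.Indep ((I ∪ Finset.univ.filter (fun x : U => x ∈ P.vtxSet ∧ x ∉ I)) \
        Finset.univ.filter (fun x : U => x ∈ P.vtxSet ∧ x ∈ I)) ∧
      N.Indep ((I ∪ Finset.univ.filter (fun x : U => x ∈ P.vtxSet ∧ x ∉ I)) \
        Finset.univ.filter (fun x : U => x ∈ P.vtxSet ∧ x ∈ I)) := by
  classical
  have hn := P.hn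
  set X := Finset.univ.filter (fun x : U => x ∈ P.vtxSet ∧ x ∉ I) with hXdef
  set Y := Finset.univ.filter (fun x : U => x ∈ P.vtxSet ∧ x ∈ I) with hYdef
  have hex : ∀ v, v ∈ P.vtxSet → ∃ i, i < P.n ∧ P.vtx i = v := fun v hv => hv
  have hMfact : ∀ i, P.vtx i ∉ I →
      P.vtx (i + P.n - 1) ∈ I ∧ P.vtx i ∈ M.sp I ∧
      P.vtx (i + P.n - 1) ∈ (M.fundC I (P.vtx i)).erase (P.vtx i) := by
    intro i hi
    have harc := P.arc (i + P.n - 1)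
    rw [show i + P.n - 1 + 1 = i + P.n by omega, P.periodic] at harc
    rcases harc with ⟨h1, _, h3, h4⟩ | ⟨_, h2, _, _⟩
    · exact ⟨h1, h3, h4⟩
    · exact absurd h2 hi
  have hNfact : ∀ i, P.vtx i ∉ I →
      P.vtx (i + 1) ∈ I ∧ P.vtx i ∈ N.sp I ∧
      P.vtx (i + 1) ∈ (N.fundC I (P.vtx i)).erase (P.vtx i) := by
    intro i hi
    rcases P.arc i with ⟨h1, _, _, _⟩ | ⟨_, h2, h3, h4⟩
    · exact absurd h1 hi
    · exact ⟨h2, h3, h4⟩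
  set mM : U → U := fun u =>
    if h : u ∈ P.vtxSet then P.vtx ((hex u h).choose + P.n - 1) else u with hmM
  set mN : U → U := fun u =>
    if h : u ∈ P.vtxSet then P.vtx ((hex u h).choose + 1) else u with hmN
  have mM_eq : ∀ u (i : ℕ), P.vtx i = u → mM u = P.vtx (i + P.n - 1) := by
    intro u i hiu
    have hv : u ∈ P.vtxSet := hiu ▸ P.vtx_mem_vtxSet i
    simp only [hmM]
    rw [dif_pos hv]
    obtain ⟨hc1, hc2⟩ := (hex u hv).choose_spec
    refine P.vtx_congr ?_
    have hc : (hex u hv).choose % P.n = i % P.n := P.vtx_inj_mod (hc2.trans hiu.symm)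
    rw [show (hex u hv).choose + P.n - 1 = (hex u hv).choose + (P.n - 1) by omega,
      show i + P.n - 1 = i + (P.n - 1) by omega]
    exact Nat.ModEq.add_right _ hc
  have mN_eq : ∀ u (i : ℕ), P.vtx i = u → mN u = P.vtx (i + 1) := by
    intro u i hiu
    have hv : u ∈ P.vtxSet := hiu ▸ P.vtx_mem_vtxSet i
    simp only [hmN]
    rw [dif_pos hv]
    obtain ⟨hc1, hc2⟩ := (hex u hv).choose_spec
    refine P.vtx_congr ?_
    exact Nat.ModEq.add_right _ (P.vtx_inj_mod (hc2.trans hiu.symm))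
  have hXmem : ∀ u ∈ X, u ∈ P.vtxSet ∧ u ∉ I := by
    intro u hu
    exact (Finset.mem_filter.mp hu).2
  have hYmem : ∀ y ∈ Y, y ∈ P.vtxSet ∧ y ∈ I := by
    intro y hy
    exact (Finset.mem_filter.mp hy).2
  constructor
  · -- M side
    refine FinMatroid.key_lemma M I X Y mM hM (fun u hu => (hXmem u hu).2)
      (fun y hy => (hYmem y hy).2) ?_ ?_ ?_ ?_ ?_
    · -- hmY
      intro u hu
      obtain ⟨huV, huI⟩ := hXmem u hu
      obtain ⟨i, hi, hiu⟩ := hex u huV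
      have hF := hMfact i (by rw [hiu]; exact huI)
      rw [mM_eq u i hiu]
      exact Finset.mem_filter.mpr ⟨Finset.mem_univ _, P.vtx_mem_vtxSet _, hF.1⟩
    · -- hminj
      intro u hu u' hu' heq
      obtain ⟨i, hi, hiu⟩ := hex u (hXmem u hu).1
      obtain ⟨i', hi', hiu'⟩ := hex u' (hXmem u' hu').1
      rw [mM_eq u i hiu, mM_eq u' i' hiu'] at heq
      have h1 := P.vtx_inj_mod heq
      rw [show i + P.n - 1 = i + (P.n - 1) by omega,
        show i' + P.n - 1 = i' + (P.n - 1) by omega] at h1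
      have h2 : i % P.n = i' % P.n := Nat.ModEq.add_right_cancel' _ h1
      rw [Nat.mod_eq_of_lt hi, Nat.mod_eq_of_lt hi'] at h2
      rw [← hiu, ← hiu', h2]
    · -- hdep
      intro u hu
      obtain ⟨huV, huI⟩ := hXmem u hu
      obtain ⟨i, hi, hiu⟩ := hex u huV
      have hF := (hMfact i (by rw [hiu]; exact huI)).2.1
      rw [hiu] at hF
      exact hF.2
    · -- hmem
      intro u hu
      obtain ⟨huV, huI⟩ := hXmem u hu
      obtain ⟨i, hi, hiu⟩ := hex u huV
      have h4 := (hMfact i (by rw [hiu]; exact huI)).2.2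
      rw [hiu] at h4
      rw [mM_eq u i hiu]
      exact Finset.mem_of_mem_erase h4
    · -- hfund
      intro u hu y hy hyF
      obtain ⟨huV, huI⟩ := hXmem u hu
      obtain ⟨hyV, hyI⟩ := hYmem y hy
      obtain ⟨i, hi, hiu⟩ := hex u huV
      have hyu : y ≠ u := fun h => huI (h ▸ hyI)
      have hsp : u ∈ M.sp I := by
        have := (hMfact i (by rw [hiu]; exact huI)).2.1
        rwa [hiu] at this
      have harc : ExchangeArc M N I y u :=
        Or.inl ⟨hyI, huI, hsp, Finset.mem_erase.mpr ⟨hyu, hyF⟩⟩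
      by_cases hmem : (y, u) ∈ P.arcs
      · obtain ⟨l, hl, hp⟩ := hmem
        have hy1 : y = P.vtx l := congrArg Prod.fst hp
        have hu1 : u = P.vtx (l + 1) := congrArg Prod.snd hp
        have hli : (l + 1) % P.n = i % P.n := P.vtx_inj_mod (hu1.symm.trans hiu.symm)
        have h6 : (l + 1 + (P.n - 1)) % P.n = (i + (P.n - 1)) % P.n :=
          Nat.ModEq.add_right _ hli
        rw [show l + 1 + (P.n - 1) = l + P.n by omega, Nat.add_mod_right] at h6
        rw [mM_eq u i hiu, hy1]
        refine P.vtx_congr ?_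
        rw [show i + P.n - 1 = i + (P.n - 1) by omega]
        exact h6
      · exact absurd (P.chord_shortcut hyV huV hyu harc hmem) (hns (y, u))
  · -- N side
    refine FinMatroid.key_lemma N I X Y mN hN (fun u hu => (hXmem u hu).2)
      (fun y hy => (hYmem y hy).2) ?_ ?_ ?_ ?_ ?_
    · intro u hu
      obtain ⟨huV, huI⟩ := hXmem u hu
      obtain ⟨i, hi, hiu⟩ := hex u huV
      have hF := hNfact i (by rw [hiu]; exact huI)
      rw [mN_eq u i hiu]
      exact Finset.mem_filter.mpr ⟨Finset.mem_univ _, P.vtx_mem_vtxSet _, hF.1⟩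
    · intro u hu u' hu' heq
      obtain ⟨i, hi, hiu⟩ := hex u (hXmem u hu).1
      obtain ⟨i', hi', hiu'⟩ := hex u' (hXmem u' hu').1
      rw [mN_eq u i hiu, mN_eq u' i' hiu'] at heq
      have h1 := P.vtx_inj_mod heq
      have h2 : i % P.n = i' % P.n := Nat.ModEq.add_right_cancel' _ h1
      rw [Nat.mod_eq_of_lt hi, Nat.mod_eq_of_lt hi'] at h2
      rw [← hiu, ← hiu', h2]
    · intro u hu
      obtain ⟨huV, huI⟩ := hXmem u hu
      obtain ⟨i, hi, hiu⟩ := hex u huV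
      have hF := (hNfact i (by rw [hiu]; exact huI)).2.1
      rw [hiu] at hF
      exact hF.2
    · intro u hu
      obtain ⟨huV, huI⟩ := hXmem u hu
      obtain ⟨i, hi, hiu⟩ := hex u huV
      have h4 := (hNfact i (by rw [hiu]; exact huI)).2.2
      rw [hiu] at h4
      rw [mN_eq u i hiu]
      exact Finset.mem_of_mem_erase h4
    · intro u hu y hy hyF
      obtain ⟨huV, huI⟩ := hXmem u hu
      obtain ⟨hyV, hyI⟩ := hYmem y hy
      obtain ⟨i, hi, hiu⟩ := hex u huV
      have hyu : y ≠ u := fun h => huI (h ▸ hyI)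
      have huy : u ≠ y := fun h => hyu h.symm
      have hsp : u ∈ N.sp I := by
        have := (hNfact i (by rw [hiu]; exact huI)).2.1
        rwa [hiu] at this
      have harc : ExchangeArc M N I u y :=
        Or.inr ⟨huI, hyI, hsp, Finset.mem_erase.mpr ⟨hyu, hyF⟩⟩
      by_cases hmem : (u, y) ∈ P.arcs
      · obtain ⟨l, hl, hp⟩ := hmem
        have hu1 : u = P.vtx l := congrArg Prod.fst hp
        have hy1 : y = P.vtx (l + 1) := congrArg Prod.snd hp
        have hli : l % P.n = i % P.n := P.vtx_inj_mod (hu1.symm.trans hiu.symm)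
        rw [mN_eq u i hiu, hy1]
        exact P.vtx_congr (Nat.ModEq.add_right 1 hli)
      · exact absurd (P.chord_shortcut huV hyV huy harc hmem) (hns (u, y))
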